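/- Let X ⊆ ℝ^m be Jordan measurable, K ⊆ X Lebesgue null, G : X → ℝ^m Lipschitz, strongly differentiable at almost every point of int X, and injective on X ∖ K. Let h̄ : X → ℝ^{m×m} be any Riemann integrable matrix-valued function with h̄(x) = J_G(x) for almost all x ∈ int X, and let f : G(X) → ℝ be bounded. Then ψ(x) := f(G(x))·|det h̄(x)| is Riemann integrable on X if and only if f is Riemann integrable on G(X), and in that case ∫_{G(X)} f = ∫_X f(G(x))·|det h̄(x)| dx. -/

import Mathlib

open Set Metric MeasureTheory

/-- A set is Jordan measurable if it is bounded and its boundary is a null set. -/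
def JordanMeasurable {m : ℕ} (X : Set (Fin m → ℝ)) : Prop :=
  Bornology.IsBounded X ∧ volume (frontier X) = 0

/-- Riemann integrability of a bounded function on a set, via the Lebesgue criterion. -/
def RiemannIntegrableOn {m : ℕ} (g : (Fin m → ℝ) → ℝ) (X : Set (Fin m → ℝ)) : Prop :=
  (∃ C : ℝ, ∀ x ∈ X, |g x| ≤ C) ∧
    ∀ᵐ x ∂(volume.restrict X), ContinuousWithinAt g X x

/-- `f` is strongly (strictly) differentiable at `u`, an interior point of `s`,
with derivative `A`. -/
def HasStrongDerivAt {m n : ℕ} (f : (Fin m → ℝ) → (Fin n → ℝ))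
    (A : (Fin m → ℝ) →L[ℝ] (Fin n → ℝ)) (s : Set (Fin m → ℝ)) (u : Fin m → ℝ) : Prop :=
  ∀ ε > (0 : ℝ), ∃ δ > (0 : ℝ), ball u δ ⊆ s ∧
    ∀ x ∈ ball u δ, ∀ y ∈ ball u δ, ‖f x - f y - A (x - y)‖ ≤ ε * ‖x - y‖

section AuxCOV

open Filter

variable {m : ℕ}

/-- Lipschitz-on images of null sets are null. -/
lemma lipschitzOnWith_image_null_cov {L : NNReal} {g : (Fin m → ℝ) → (Fin m → ℝ)}
    {s t : Set (Fin m → ℝ)} (hg : LipschitzOnWith L g s) (hts : t ⊆ s)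
    (ht : volume t = 0) : volume (g '' t) = 0 := by
  have h := (hg.mono hts).hausdorffMeasure_image_le
    (d := (Fintype.card (Fin m) : ℝ)) (by positivity)
  rw [hausdorffMeasure_pi_real] at h
  rw [ht, mul_zero] at h
  exact le_antisymm h zero_le

/-- Co-Lipschitz maps pull null sets back to null sets. -/
lemma antilip_inter_preimage_null_cov {G : (Fin m → ℝ) → (Fin m → ℝ)} {c : ℝ} (hc : 0 < c)
    {t D : Set (Fin m → ℝ)} (hD : volume D = 0)
    (hco : ∀ p ∈ t, ∀ q ∈ t, c * ‖p - q‖ ≤ ‖G p - G q‖) :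
    volume (t ∩ G ⁻¹' D) = 0 := by
  have hinj : Set.InjOn G t := by
    intro p hp q hq hpq
    have h1 := hco p hp q hq
    rw [hpq, sub_self, norm_zero] at h1
    have h2 : ‖p - q‖ = 0 := le_antisymm (by nlinarith [norm_nonneg (p - q)]) (norm_nonneg _)
    exact sub_eq_zero.mp (norm_eq_zero.mp h2)
  set g := Function.invFunOn G t with hg
  have hmem : ∀ y ∈ G '' t, g y ∈ t ∧ G (g y) = y := by
    intro y hy
    exact ⟨Function.invFunOn_mem hy, Function.invFunOn_eq hy⟩
  have hlip : LipschitzOnWith (Real.toNNReal c⁻¹) g (G '' t) := by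
    rw [lipschitzOnWith_iff_dist_le_mul]
    intro y1 h1 y2 h2
    obtain ⟨m1, hm1⟩ := hmem y1 h1
    obtain ⟨m2, hm2⟩ := hmem y2 h2
    have := hco (g y1) m1 (g y2) m2
    rw [hm1, hm2] at this
    rw [dist_eq_norm, dist_eq_norm, Real.coe_toNNReal _ (le_of_lt (inv_pos.2 hc))]
    rw [le_inv_mul_iff₀ hc]
    linarith
  have hsub : t ∩ G ⁻¹' D ⊆ g '' (D ∩ G '' t) := by
    intro x ⟨hxt, hxD⟩
    exact ⟨G x, ⟨hxD, mem_image_of_mem _ hxt⟩, hinj.leftInvOn_invFunOn hxt⟩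
  refine measure_mono_null hsub (lipschitzOnWith_image_null_cov hlip inter_subset_right
    (measure_mono_null inter_subset_left hD))

/-- Countable-cover argument: locally co-Lipschitz points mapping into a null set form
a null set. -/
lemma bad_set_null_cov {G : (Fin m → ℝ) → (Fin m → ℝ)} {D B : Set (Fin m → ℝ)}
    (hD : volume D = 0)
    (hB : ∀ x ∈ B, G x ∈ D ∧ ∃ δ > (0:ℝ), ∃ c > (0:ℝ),
      ∀ p ∈ ball x δ, ∀ q ∈ ball x δ, c * ‖p - q‖ ≤ ‖G p - G q‖) :
    volume B = 0 := by
  classical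
  choose! δ hδ c hc hco using fun x hx => (hB x hx).2
  set u : B → Set (Fin m → ℝ) := fun x => ball x (δ x) with hu
  obtain ⟨T, hTcount, hTeq⟩ := TopologicalSpace.isOpen_iUnion_countable u (fun x => isOpen_ball)
  have hcover : B ⊆ ⋃ i ∈ T, u i := by
    rw [hTeq]
    intro x hx
    exact mem_iUnion.2 ⟨⟨x, hx⟩, mem_ball_self (hδ x hx)⟩
  have : volume (⋃ i ∈ T, u i ∩ G ⁻¹' D) = 0 := by
    rw [measure_biUnion_null_iff hTcount]
    intro i _
    exact antilip_inter_preimage_null_cov (hc i i.2) hD (hco i i.2)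
  refine measure_mono_null ?_ this
  intro x hx
  obtain ⟨i, hiT, hiu⟩ := mem_iUnion₂.1 (hcover hx)
  exact mem_iUnion₂.2 ⟨i, hiT, hiu, (hB x hx).1⟩

/-- A strong derivative is a strict Fréchet derivative. -/
lemma strong_to_strict_cov {G : (Fin m → ℝ) → (Fin m → ℝ)} {A : (Fin m → ℝ) →L[ℝ] (Fin m → ℝ)}
    {X : Set (Fin m → ℝ)} {x : Fin m → ℝ} (h : HasStrongDerivAt G A X x) :
    HasStrictFDerivAt G A x := by
  constructor
  rw [Asymptotics.isLittleOTVS_iff_isLittleO, Asymptotics.isLittleO_iff]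
  intro c hc
  obtain ⟨δ, hδ, -, hest⟩ := h c hc
  have hmem : ball x δ ×ˢ ball x δ ∈ nhds (x, x) := by
    rw [nhds_prod_eq]
    exact Filter.prod_mem_prod (ball_mem_nhds x hδ) (ball_mem_nhds x hδ)
  filter_upwards [hmem] with p hp
  exact hest p.1 hp.1 p.2 hp.2

/-- From an invertible strong derivative, obtain a ball inside `X` on which `G` is
co-Lipschitz. -/
lemma strong_colip_cov {G : (Fin m → ℝ) → (Fin m → ℝ)} {A : (Fin m → ℝ) →L[ℝ] (Fin m → ℝ)}
    {X : Set (Fin m → ℝ)} {x : Fin m → ℝ} (h : HasStrongDerivAt G A X x)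
    (e : (Fin m → ℝ) ≃L[ℝ] (Fin m → ℝ)) (he : ⇑e = ⇑A) :
    ∃ δ > (0 : ℝ), ball x δ ⊆ X ∧ ∃ c > (0 : ℝ),
      ∀ p ∈ ball x δ, ∀ q ∈ ball x δ, c * ‖p - q‖ ≤ ‖G p - G q‖ := by
  set M : ℝ := ‖(e.symm : (Fin m → ℝ) →L[ℝ] (Fin m → ℝ))‖ + 1 with hM
  have hM1 : 0 < M := by positivity
  obtain ⟨δ, hδ, hball, hest⟩ := h ((2 * M)⁻¹) (by positivity)
  refine ⟨δ, hδ, hball, (2 * M)⁻¹, by positivity, ?_⟩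
  intro p hp q hq
  have hinv : ∀ v : Fin m → ℝ, ‖v‖ ≤ M * ‖A v‖ := by
    intro v
    have h1 : ‖v‖ = ‖e.symm (A v)‖ := by rw [← he]; simp
    calc ‖v‖ = ‖e.symm (A v)‖ := h1
      _ ≤ ‖(e.symm : (Fin m → ℝ) →L[ℝ] (Fin m → ℝ))‖ * ‖A v‖ :=
          (e.symm : (Fin m → ℝ) →L[ℝ] (Fin m → ℝ)).le_opNorm _
      _ ≤ M * ‖A v‖ := by
          have := norm_nonneg (A v)
          nlinarith [norm_nonneg ((e.symm : (Fin m → ℝ) →L[ℝ] (Fin m → ℝ)))]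
  have h2 := hest p hp q hq
  have h3 : ‖A (p - q)‖ - ‖G p - G q‖ ≤ (2 * M)⁻¹ * ‖p - q‖ := by
    calc ‖A (p - q)‖ - ‖G p - G q‖ ≤ ‖G p - G q - A (p - q)‖ := by
          have t1 := norm_sub_norm_le (A (p - q)) (G p - G q)
          rw [norm_sub_rev (A (p - q))] at t1
          exact t1
      _ ≤ (2 * M)⁻¹ * ‖p - q‖ := h2
  have h4 : M⁻¹ * ‖p - q‖ ≤ ‖A (p - q)‖ := by
    rw [inv_mul_le_iff₀ hM1]
    exact hinv _
  have h5 : (2 * M)⁻¹ * ‖p - q‖ = M⁻¹ * ‖p - q‖ - (2 * M)⁻¹ * ‖p - q‖ := by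
    field_simp; ring
  linarith

/-- Build a continuous linear equiv from a CLM with nonzero determinant. -/
lemma equiv_of_det_ne_zero_cov (A : (Fin m → ℝ) →L[ℝ] (Fin m → ℝ)) (hA : A.det ≠ 0) :
    ∃ e : (Fin m → ℝ) ≃L[ℝ] (Fin m → ℝ), (e : (Fin m → ℝ) →L[ℝ] (Fin m → ℝ)) = A := by
  have : LinearMap.det (A : (Fin m → ℝ) →ₗ[ℝ] (Fin m → ℝ)) ≠ 0 := hA
  refine ⟨(LinearMap.equivOfDetNeZero _ this).toContinuousLinearEquiv, ?_⟩
  ext v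
  rfl

/-- `det ∘ hbar` is continuous within `X` wherever all entries are. -/
lemma det_continuousWithinAt_cov {hbar : (Fin m → ℝ) → Matrix (Fin m) (Fin m) ℝ}
    {X : Set (Fin m → ℝ)} {x : Fin m → ℝ}
    (h : ∀ i j, ContinuousWithinAt (fun y => hbar y i j) X x) :
    ContinuousWithinAt (fun y => (hbar y).det) X x := by
  have hm : ContinuousWithinAt hbar X x := by
    apply continuousWithinAt_pi.2
    intro i
    apply continuousWithinAt_pi.2
    intro j
    exact h i j
  exact (Continuous.matrix_det continuous_id).continuousAt.comp_continuousWithinAt hm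

/-- A uniform bound on determinants from bounds on entries. -/
lemma det_bound_cov {hbar : (Fin m → ℝ) → Matrix (Fin m) (Fin m) ℝ} {X : Set (Fin m → ℝ)}
    (h : ∀ i j : Fin m, ∃ C : ℝ, ∀ x ∈ X, |hbar x i j| ≤ C) :
    ∃ Cd : ℝ, 0 ≤ Cd ∧ ∀ x ∈ X, |(hbar x).det| ≤ Cd := by
  classical
  choose C hC using h
  set B : ℝ := ∑ i : Fin m, ∑ j : Fin m, |C i j| with hB
  have hBnn : 0 ≤ B := Finset.sum_nonneg fun i _ => Finset.sum_nonneg fun j _ => abs_nonneg _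
  have hentry : ∀ x ∈ X, ∀ i j, |hbar x i j| ≤ B := by
    intro x hx i j
    refine le_trans (hC i j x hx) (le_trans (le_abs_self _) ?_)
    calc |C i j| ≤ ∑ j' : Fin m, |C i j'| :=
          Finset.single_le_sum (fun j' _ => abs_nonneg (C i j')) (Finset.mem_univ j)
      _ ≤ B := Finset.single_le_sum
          (f := fun i' => ∑ j' : Fin m, |C i' j'|)
          (fun i' _ => Finset.sum_nonneg fun j' _ => abs_nonneg _) (Finset.mem_univ i)
  refine ⟨(Nat.factorial m : ℝ) * B ^ m, by positivity, ?_⟩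
  intro x hx
  rw [Matrix.det_apply]
  refine le_trans (Finset.abs_sum_le_sum_abs _ _) ?_
  have hterm : ∀ σ : Equiv.Perm (Fin m),
      |Equiv.Perm.sign σ • ∏ i, hbar x (σ i) i| ≤ B ^ m := by
    intro σ
    have : (Equiv.Perm.sign σ • ∏ i, hbar x (σ i) i)
        = ((Equiv.Perm.sign σ : ℤ) : ℝ) * ∏ i, hbar x (σ i) i := by
      rw [Units.smul_def, zsmul_eq_mul]
    rw [this, abs_mul]
    have hsign : |((Equiv.Perm.sign σ : ℤ) : ℝ)| = 1 := by
      rcases Int.units_eq_one_or (Equiv.Perm.sign σ) with h | h <;> simp [h]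
    rw [hsign, one_mul, Finset.abs_prod]
    calc ∏ i, |hbar x (σ i) i| ≤ ∏ _i : Fin m, B :=
          Finset.prod_le_prod (fun i _ => abs_nonneg _) (fun i _ => hentry x hx (σ i) i)
      _ = B ^ m := by simp
  calc ∑ σ : Equiv.Perm (Fin m), |Equiv.Perm.sign σ • ∏ i, hbar x (σ i) i|
      ≤ ∑ _σ : Equiv.Perm (Fin m), B ^ m := Finset.sum_le_sum fun σ _ => hterm σ
    _ = (Nat.factorial m : ℝ) * B ^ m := by
        rw [Finset.sum_const, Finset.card_univ, Fintype.card_perm, Fintype.card_fin, nsmul_eq_mul]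

/-- To prove an a.e. statement for a restricted measure, it suffices to cover the bad set
by a null set. -/
lemma ae_restrict_of_subset_null_cov {α : Type*} [MeasurableSpace α] {μ : Measure α}
    {S Z : Set α} {P : α → Prop} (hZ : μ Z = 0) (h : ∀ y, ¬ P y → y ∈ Z) :
    ∀ᵐ y ∂μ.restrict S, P y := by
  rw [ae_iff]
  have h1 : {y | ¬ P y} ⊆ toMeasurable μ Z := fun y hy => subset_toMeasurable μ Z (h y hy)
  refine measure_mono_null h1 ?_
  rw [Measure.restrict_apply (measurableSet_toMeasurable μ Z)]
  exact measure_mono_null inter_subset_left (by rwa [measure_toMeasurable])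

/-- Extract a global null set covering the bad points of an a.e. statement for a restricted
measure. -/
lemma null_inter_of_ae_restrict_cov {α : Type*} [MeasurableSpace α] {μ : Measure α}
    {S : Set α} {P : α → Prop} (h : ∀ᵐ y ∂μ.restrict S, P y) :
    ∃ Z : Set α, μ (Z ∩ S) = 0 ∧ ∀ y ∈ S, ¬ P y → y ∈ Z ∩ S := by
  rw [ae_iff] at h
  refine ⟨toMeasurable (μ.restrict S) {y | ¬ P y}, ?_,
    fun y hyS hyP => ⟨subset_toMeasurable _ _ hyP, hyS⟩⟩
  have h2 : μ.restrict S (toMeasurable (μ.restrict S) {y | ¬ P y}) = 0 := by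
    rwa [measure_toMeasurable]
  rwa [Measure.restrict_apply (measurableSet_toMeasurable _ _)] at h2

end AuxCOV

/-- The main multidimensional change of variables theorem: for a Lipschitz map `G` which
is a.e. strongly differentiable on `int X` and injective off a null set `K ⊆ X`, a
Riemann integrable matrix-valued `hbar` equal to the Jacobian `J_G` a.e. on `int X`, and a
bounded `f` on `G(X)`, the function `ψ(x) = f(G(x))·|det hbar(x)|` is Riemann integrable on
`X` iff `f` is Riemann integrable on `G(X)`, and then `∫_{G(X)} f = ∫_X ψ`. -/
theorem change_of_variables_main {m : ℕ} (X K : Set (Fin m → ℝ))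
    (hX : JordanMeasurable X) (hKX : K ⊆ X) (hK : volume K = 0)
    (G : (Fin m → ℝ) → (Fin m → ℝ)) (L : NNReal) (hG : LipschitzOnWith L G X)
    (hinj : Set.InjOn G (X \ K))
    (hbar : (Fin m → ℝ) → Matrix (Fin m) (Fin m) ℝ)
    (hhbarint : ∀ i j : Fin m, RiemannIntegrableOn (fun x => hbar x i j) X)
    (hhbarjac : ∃ N : Set (Fin m → ℝ), volume N = 0 ∧ ∀ x ∈ interior X \ N,
      ∃ A : (Fin m → ℝ) →L[ℝ] (Fin m → ℝ), HasStrongDerivAt G A X x ∧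
        hbar x = LinearMap.toMatrix' (A : (Fin m → ℝ) →ₗ[ℝ] (Fin m → ℝ)))
    (f : (Fin m → ℝ) → ℝ) (hf : ∃ C : ℝ, ∀ y ∈ G '' X, |f y| ≤ C) :
    (RiemannIntegrableOn (fun x => f (G x) * |(hbar x).det|) X ↔
      RiemannIntegrableOn f (G '' X)) ∧
    (RiemannIntegrableOn f (G '' X) →
      ∫ y in G '' X, f y = ∫ x in X, f (G x) * |(hbar x).det|) := by
  classical
  obtain ⟨N, hN, hjac⟩ := hhbarjac
  choose! Af hAf1 hAf2 using hjac
  -- the good measurable set `s`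
  set s : Set (Fin m → ℝ) := interior X \ (toMeasurable volume K ∪ toMeasurable volume N)
    with hs_def
  have hsmeas : MeasurableSet s := measurableSet_interior.diff
    ((measurableSet_toMeasurable _ _).union (measurableSet_toMeasurable _ _))
  have hsX : s ⊆ X := fun x hx => interior_subset hx.1
  have hfront : volume (frontier X) = 0 := hX.2
  have hUnull : volume (frontier X ∪ (toMeasurable volume K ∪ toMeasurable volume N)) = 0 := by
    refine measure_union_null hfront (measure_union_null ?_ ?_)
    · rwa [measure_toMeasurable]
    · rwa [measure_toMeasurable]
  have hXdiff : X \ s ⊆ frontier X ∪ (toMeasurable volume K ∪ toMeasurable volume N) := by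
    intro x hx
    by_cases hxi : x ∈ interior X
    · right; by_contra h; exact hx.2 ⟨hxi, h⟩
    · left; exact ⟨subset_closure hx.1, hxi⟩
  have hXs : volume (X \ s) = 0 := measure_mono_null hXdiff hUnull
  have hXsae : X =ᵐ[volume] s := by
    rw [ae_eq_set]
    refine ⟨hXs, ?_⟩
    rw [diff_eq_empty.2 hsX]
    exact measure_empty
  have hs_in : ∀ x ∈ s, x ∈ interior X \ N :=
    fun x hx => ⟨hx.1, fun h => hx.2 (Or.inr (subset_toMeasurable _ _ h))⟩
  have hstrong : ∀ x ∈ s, HasStrongDerivAt G (Af x) X x := fun x hx => hAf1 x (hs_in x hx)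
  have hmat : ∀ x ∈ s, hbar x
      = LinearMap.toMatrix' ((Af x : (Fin m → ℝ) →ₗ[ℝ] (Fin m → ℝ))) :=
    fun x hx => hAf2 x (hs_in x hx)
  have hdet_eq : ∀ x ∈ s, (hbar x).det = (Af x).det := by
    intro x hx
    rw [hmat x hx]
    exact LinearMap.det_toMatrix' _
  have hfderiv : ∀ x ∈ s, HasFDerivAt G (Af x) x :=
    fun x hx => (strong_to_strict_cov (hstrong x hx)).hasFDerivAt
  have hinj_s : Set.InjOn G s := hinj.mono
    (show s ⊆ X \ K from fun x hx => ⟨hsX hx, fun h => hx.2 (Or.inl (subset_toMeasurable _ _ h))⟩)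
  have hTnull : volume (G '' {x ∈ s | (Af x).det = 0}) = 0 :=
    addHaar_image_eq_zero_of_det_fderivWithin_eq_zero volume
      (fun x hx => ((hfderiv x hx.1).hasFDerivWithinAt)) (fun x hx => hx.2)
  have himg_null : ∀ t, t ⊆ X → volume t = 0 → volume (G '' t) = 0 :=
    fun t h1 h2 => lipschitzOnWith_image_null_cov hG h1 h2
  -- extension of `G` and the topology of `Y := G '' X`
  obtain ⟨Gt, hGtlip, hGteq⟩ := hG.extend_pi
  have hYGt : G '' X = Gt '' X := image_congr (fun x hx => hGteq hx)
  have hclosX : IsCompact (Gt '' closure X) := (hX.1.isCompact_closure).image hGtlip.continuous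
  have hclosY : closure (G '' X) ⊆ Gt '' closure X := by
    rw [hYGt]
    exact closure_minimal (image_mono subset_closure) hclosX.isClosed
  have hclosYnull : volume (closure (G '' X) \ G '' X) = 0 := by
    have hsub : closure (G '' X) \ G '' X ⊆ Gt '' (frontier X) := by
      intro y hy
      obtain ⟨x, hx, rfl⟩ := hclosY hy.1
      by_cases hxX : x ∈ X
      · exact absurd (by rw [hYGt]; exact mem_image_of_mem _ hxX) hy.2
      · exact mem_image_of_mem _ ⟨hx, fun h => hxX (interior_subset h)⟩
    exact measure_mono_null hsub
      (lipschitzOnWith_image_null_cov (hGtlip.lipschitzOnWith (s := univ)) (subset_univ _) hfront)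
  have hYint : ∀ x ∈ s, (Af x).det ≠ 0 → G x ∈ interior (G '' X) := by
    intro x hx hdet
    obtain ⟨e, he⟩ := equiv_of_det_ne_zero_cov (Af x) hdet
    have hstrict : HasStrictFDerivAt G (e : (Fin m → ℝ) →L[ℝ] (Fin m → ℝ)) x := by
      rw [he]; exact strong_to_strict_cov (hstrong x hx)
    set P := hstrict.toOpenPartialHomeomorph G with hP
    have hPcoe : ⇑P = G := hstrict.toOpenPartialHomeomorph_coe
    have hxsrc : x ∈ P.source := hstrict.mem_toOpenPartialHomeomorph_source
    have hopen : IsOpen (G '' (P.source ∩ interior X)) := by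
      have h0 := P.isOpen_image_of_subset_source (s := P.source ∩ interior X)
        (P.open_source.inter isOpen_interior) inter_subset_left
      rwa [hPcoe] at h0
    have hGxmem : G x ∈ G '' (P.source ∩ interior X) := ⟨x, ⟨hxsrc, hx.1⟩, rfl⟩
    have hsubY : G '' (P.source ∩ interior X) ⊆ G '' X := by
      rintro y ⟨x', ⟨-, hx'⟩, rfl⟩
      exact mem_image_of_mem _ (interior_subset hx')
    exact mem_interior.2 ⟨G '' (P.source ∩ interior X), hsubY, hopen, hGxmem⟩
  have hYfront : volume (frontier (G '' X)) = 0 := by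
    have hsub : frontier (G '' X) ⊆ (closure (G '' X) \ G '' X)
        ∪ (G '' (X \ s) ∪ G '' {x ∈ s | (Af x).det = 0}) := by
      intro y hy
      by_cases hyY : y ∈ G '' X
      · right
        obtain ⟨x, hxX, rfl⟩ := hyY
        have hnint : G x ∉ interior (G '' X) := hy.2
        by_cases hxs : x ∈ s
        · right
          refine ⟨x, ⟨hxs, ?_⟩, rfl⟩
          by_contra hdet
          exact hnint (hYint x hxs hdet)
        · left; exact mem_image_of_mem _ ⟨hxX, hxs⟩
      · left; exact ⟨hy.1, hyY⟩
    exact measure_mono_null hsub (measure_union_null hclosYnull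
      (measure_union_null (himg_null _ diff_subset hXs) hTnull))
  have hYnm : NullMeasurableSet (G '' X) volume := by
    have heq : G '' X = interior (G '' X) ∪ (G '' X \ interior (G '' X)) :=
      (union_diff_cancel interior_subset).symm
    rw [heq]
    refine (isOpen_interior.measurableSet.nullMeasurableSet).union
      (NullMeasurableSet.of_null (measure_mono_null ?_ hYfront))
    exact fun y hy => ⟨subset_closure hy.1, hy.2⟩
  have hXnm : NullMeasurableSet X volume := by
    have heq : X = interior X ∪ (X \ interior X) := (union_diff_cancel interior_subset).symm
    rw [heq]
    refine (isOpen_interior.measurableSet.nullMeasurableSet).union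
      (NullMeasurableSet.of_null (measure_mono_null ?_ hfront))
    exact fun y hy => ⟨subset_closure hy.1, hy.2⟩
  -- bounds
  obtain ⟨Cf, hCf⟩ := hf
  have hC' : ∀ y ∈ G '' X, |f y| ≤ max Cf 0 := fun y hy => le_trans (hCf y hy) (le_max_left _ _)
  have hC'0 : (0:ℝ) ≤ max Cf 0 := le_max_right _ _
  obtain ⟨Cd, hCd0, hCd⟩ := det_bound_cov (fun i j => (hhbarint i j).1)
  -- the key analytic claim: at good points of `s`, `f` is continuous at `G x`
  have claim1 : ∀ x ∈ s, ContinuousWithinAt (fun y => f (G y) * |(hbar y).det|) X x →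
      (∀ i j, ContinuousWithinAt (fun y => hbar y i j) X x) → (Af x).det ≠ 0 →
      ContinuousAt f (G x) := by
    intro x hxs hψc hentc hdet
    obtain ⟨e, he⟩ := equiv_of_det_ne_zero_cov (Af x) hdet
    have hstrict : HasStrictFDerivAt G (e : (Fin m → ℝ) →L[ℝ] (Fin m → ℝ)) x := by
      rw [he]; exact strong_to_strict_cov (hstrong x hxs)
    set P := hstrict.toOpenPartialHomeomorph G with hP
    have hPcoe : ⇑P = G := hstrict.toOpenPartialHomeomorph_coe
    have hxsrc : x ∈ P.source := hstrict.mem_toOpenPartialHomeomorph_source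
    have hytgt : G x ∈ P.target := hstrict.image_mem_toOpenPartialHomeomorph_target
    have hsymmx : P.symm (G x) = x := by
      have h0 := P.left_inv hxsrc
      rwa [hPcoe] at h0
    have hsymm_cont : ContinuousAt P.symm (G x) := P.continuousAt_symm hytgt
    have h_into : Filter.Tendsto P.symm (nhds (G x)) (nhdsWithin x X) := by
      rw [tendsto_nhdsWithin_iff]
      constructor
      · have h0 : Filter.Tendsto P.symm (nhds (G x)) (nhds (P.symm (G x))) := hsymm_cont
        rwa [hsymmx] at h0
      · have hmem : P.symm ⁻¹' (interior X) ∈ nhds (G x) := by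
          apply hsymm_cont
          rw [hsymmx]
          exact isOpen_interior.mem_nhds hxs.1
        filter_upwards [hmem] with y' hy'
        exact interior_subset hy'
    have hdetx : (0:ℝ) < |(hbar x).det| := abs_pos.2 (by rw [hdet_eq x hxs]; exact hdet)
    have hdet_cwa : ContinuousWithinAt (fun y => |(hbar y).det|) X x :=
      (det_continuousWithinAt_cov hentc).abs
    have hdet_tendsto : Filter.Tendsto (fun y' => |(hbar (P.symm y')).det|)
        (nhds (G x)) (nhds |(hbar x).det|) := hdet_cwa.tendsto.comp h_into
    have hψ_tendsto : Filter.Tendsto (fun y' => f (G (P.symm y')) * |(hbar (P.symm y')).det|)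
        (nhds (G x)) (nhds (f (G x) * |(hbar x).det|)) := hψc.tendsto.comp h_into
    have hFlim : Filter.Tendsto
        (fun y' => (f (G (P.symm y')) * |(hbar (P.symm y')).det|) / |(hbar (P.symm y')).det|)
        (nhds (G x)) (nhds ((f (G x) * |(hbar x).det|) / |(hbar x).det|)) :=
      hψ_tendsto.div hdet_tendsto (ne_of_gt hdetx)
    have hval : (f (G x) * |(hbar x).det|) / |(hbar x).det| = f (G x) := by
      rw [mul_div_assoc, div_self (ne_of_gt hdetx), mul_one]
    have hev1 : ∀ᶠ y' in nhds (G x), y' ∈ P.target := P.open_target.mem_nhds hytgt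
    have hev2 : ∀ᶠ y' in nhds (G x), |(hbar (P.symm y')).det| ≠ 0 :=
      hdet_tendsto.eventually_ne (ne_of_gt hdetx)
    have heq : ∀ᶠ y' in nhds (G x),
        (f (G (P.symm y')) * |(hbar (P.symm y')).det|) / |(hbar (P.symm y')).det| = f y' := by
      filter_upwards [hev1, hev2] with y' h1 h2
      have hGy' : G (P.symm y') = y' := by
        have h0 := P.right_inv h1
        rwa [hPcoe] at h0
      rw [hGy', mul_div_assoc, div_self h2, mul_one]
    have hfinal : Filter.Tendsto f (nhds (G x)) (nhds (f (G x))) := by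
      rw [← hval]
      exact hFlim.congr' heq
    exact hfinal
  refine ⟨⟨?_, ?_⟩, ?_⟩
  · -- forward: ψ Riemann integrable → f Riemann integrable
    intro hψRI
    refine ⟨⟨Cf, hCf⟩, ?_⟩
    obtain ⟨Z1, hZ1, hZ1mem⟩ := null_inter_of_ae_restrict_cov hψRI.2
    have hent_ae : ∀ᵐ x ∂(volume.restrict X),
        ∀ i j, ContinuousWithinAt (fun y => hbar y i j) X x :=
      ae_all_iff.2 fun i => ae_all_iff.2 fun j => (hhbarint i j).2
    obtain ⟨Z2, hZ2, hZ2mem⟩ := null_inter_of_ae_restrict_cov hent_ae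
    set W : Set (Fin m → ℝ) := (closure (G '' X) \ G '' X) ∪ (G '' (X \ s)
      ∪ (G '' ((Z1 ∩ X) ∪ (Z2 ∩ X)) ∪ G '' {x ∈ s | (Af x).det = 0})) with hW
    have hWnull : volume W = 0 := by
      refine measure_union_null hclosYnull (measure_union_null (himg_null _ diff_subset hXs)
        (measure_union_null (himg_null _ ?_ (measure_union_null hZ1 hZ2)) hTnull))
      exact union_subset inter_subset_right inter_subset_right
    refine ae_restrict_of_subset_null_cov hWnull ?_
    intro y hy
    by_cases hycl : y ∈ closure (G '' X)
    · by_cases hyY : y ∈ G '' X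
      · obtain ⟨x, hxX, rfl⟩ := hyY
        by_cases hxs : x ∈ s
        · by_cases hψc : ContinuousWithinAt (fun y => f (G y) * |(hbar y).det|) X x
          · by_cases hentc : ∀ i j, ContinuousWithinAt (fun y => hbar y i j) X x
            · by_cases hdet : (Af x).det = 0
              · exact Or.inr (Or.inr (Or.inr (mem_image_of_mem _ ⟨hxs, hdet⟩)))
              · exact absurd ((claim1 x hxs hψc hentc hdet).continuousWithinAt) hy
            · exact Or.inr (Or.inr (Or.inl (mem_image_of_mem _
                (Or.inr (hZ2mem x hxX hentc)))))
          · exact Or.inr (Or.inr (Or.inl (mem_image_of_mem _ (Or.inl (hZ1mem x hxX hψc)))))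
        · exact Or.inr (Or.inl (mem_image_of_mem _ ⟨hxX, hxs⟩))
      · exact Or.inl ⟨hycl, hyY⟩
    · exfalso
      apply hy
      have hnb : ¬ (nhdsWithin y (G '' X)).NeBot :=
        fun h => hycl (mem_closure_iff_nhdsWithin_neBot.mpr h)
      have hbot : nhdsWithin y (G '' X) = ⊥ := Filter.not_neBot.mp hnb
      unfold ContinuousWithinAt
      rw [hbot]
      exact Filter.tendsto_bot
  · -- backward: f Riemann integrable → ψ Riemann integrable
    intro hfRI
    constructor
    · refine ⟨max Cf 0 * Cd, ?_⟩
      intro x hx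
      rw [abs_mul, abs_abs]
      exact mul_le_mul (hC' _ (mem_image_of_mem _ hx)) (hCd x hx) (abs_nonneg _) hC'0
    · obtain ⟨Z0, hZ0, hZ0mem⟩ := null_inter_of_ae_restrict_cov hfRI.2
      set B : Set (Fin m → ℝ) :=
        {x | x ∈ s ∧ (Af x).det ≠ 0 ∧ G x ∈ Z0 ∩ G '' X} with hB
      have hBnull : volume B = 0 := by
        refine bad_set_null_cov (G := G) hZ0 ?_
        rintro x ⟨hxs, hdet, hxD⟩
        refine ⟨hxD, ?_⟩
        obtain ⟨e, he⟩ := equiv_of_det_ne_zero_cov (Af x) hdet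
        have he' : ⇑e = ⇑(Af x) := by rw [← he]; rfl
        obtain ⟨δ, hδ, -, c, hc, hco⟩ := strong_colip_cov (hstrong x hxs) e he'
        exact ⟨δ, hδ, c, hc, hco⟩
      have h1 : ∀ᵐ x ∂(volume.restrict X), x ∈ X := ae_restrict_mem₀ hXnm
      have h2 : ∀ᵐ x ∂(volume.restrict X),
          x ∉ (frontier X ∪ (toMeasurable volume K ∪ toMeasurable volume N)) :=
        ae_restrict_of_subset_null_cov hUnull (fun y hy => not_not.mp hy)
      have h3 : ∀ᵐ x ∂(volume.restrict X), x ∉ B :=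
        ae_restrict_of_subset_null_cov hBnull (fun y hy => not_not.mp hy)
      have h4 : ∀ᵐ x ∂(volume.restrict X),
          ∀ i j, ContinuousWithinAt (fun y => hbar y i j) X x :=
        ae_all_iff.2 fun i => ae_all_iff.2 fun j => (hhbarint i j).2
      filter_upwards [h1, h2, h3, h4] with x hx1 hx2 hx3 hx4
      have hxs : x ∈ s := by
        constructor
        · by_contra hni
          exact hx2 (Or.inl ⟨subset_closure hx1, hni⟩)
        · intro hmem
          exact hx2 (Or.inr hmem)
      have hdet_cwa : ContinuousWithinAt (fun y => |(hbar y).det|) X x :=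
        (det_continuousWithinAt_cov hx4).abs
      by_cases hdet : (Af x).det = 0
      · -- squeeze: ψ is continuous since it vanishes at x
        have hdet0 : (hbar x).det = 0 := by rw [hdet_eq x hxs]; exact hdet
        have hψx : f (G x) * |(hbar x).det| = 0 := by rw [hdet0]; simp
        have hlim : Filter.Tendsto (fun y => max Cf 0 * |(hbar y).det|)
            (nhdsWithin x X) (nhds 0) := by
          have h0 : Filter.Tendsto (fun y => |(hbar y).det|) (nhdsWithin x X)
              (nhds |(hbar x).det|) := hdet_cwa.tendsto
          rw [hdet0, abs_zero] at h0
          have := h0.const_mul (max Cf 0)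
          rwa [mul_zero] at this
        have hlim' : Filter.Tendsto (fun y => -(max Cf 0 * |(hbar y).det|))
            (nhdsWithin x X) (nhds 0) := by
          have := hlim.neg
          rwa [neg_zero] at this
        have hT0 : Filter.Tendsto (fun y => f (G y) * |(hbar y).det|)
            (nhdsWithin x X) (nhds 0) := by
          refine tendsto_of_tendsto_of_tendsto_of_le_of_le' hlim' hlim ?_ ?_
          · filter_upwards [self_mem_nhdsWithin] with y hyX
            have h1 : |f (G y)| ≤ max Cf 0 := hC' _ (mem_image_of_mem _ hyX)
            have h2 : (0:ℝ) ≤ |(hbar y).det| := abs_nonneg _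
            nlinarith [neg_abs_le (f (G y))]
          · filter_upwards [self_mem_nhdsWithin] with y hyX
            have h1 : |f (G y)| ≤ max Cf 0 := hC' _ (mem_image_of_mem _ hyX)
            have h2 : (0:ℝ) ≤ |(hbar y).det| := abs_nonneg _
            nlinarith [le_abs_self (f (G y))]
        unfold ContinuousWithinAt
        rw [show (fun y => f (G y) * |(hbar y).det|) x = 0 from hψx]
        exact hT0
      · -- f ∘ G is continuous at x
        have hGxY : G x ∈ G '' X := mem_image_of_mem _ hx1
        have hfc : ContinuousWithinAt f (G '' X) (G x) := by
          by_contra hnc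
          exact hx3 ⟨hxs, hdet, hZ0mem (G x) hGxY hnc⟩
        have hGc : ContinuousWithinAt G X x := hG.continuousOn x hx1
        have hcomp : ContinuousWithinAt (fun y => f (G y)) X x :=
          hfc.comp hGc (mapsTo_image G X)
        exact hcomp.mul hdet_cwa
  · -- the integral identity
    intro _hfRI
    have himg_ae : (G '' X : Set (Fin m → ℝ)) =ᵐ[volume] (G '' s) := by
      rw [ae_eq_set]
      constructor
      · refine measure_mono_null ?_ (himg_null _ diff_subset hXs)
        rintro y ⟨⟨x, hxX, rfl⟩, hys⟩
        exact ⟨x, ⟨hxX, fun hxs => hys (mem_image_of_mem _ hxs)⟩, rfl⟩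
      · rw [diff_eq_empty.2 (image_mono hsX)]
        exact measure_empty
    calc ∫ y in G '' X, f y = ∫ y in G '' s, f y := setIntegral_congr_set himg_ae
      _ = ∫ x in s, |(Af x).det| • f (G x) :=
          integral_image_eq_integral_abs_det_fderiv_smul volume hsmeas
            (fun x hx => (hfderiv x hx).hasFDerivWithinAt) hinj_s f
      _ = ∫ x in s, f (G x) * |(hbar x).det| := by
          refine setIntegral_congr_fun hsmeas ?_
          intro x hx
          show |(Af x).det| • f (G x) = f (G x) * |(hbar x).det|
          rw [hdet_eq x hx, smul_eq_mul, mul_comm]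
      _ = ∫ x in X, f (G x) * |(hbar x).det| := (setIntegral_congr_set hXsae).symm
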